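/- Main theorem: if the enzyme allocation problem (maximize the flux component v̄_{r*} over metabolite concentrations x̄ ∈ X and enzyme concentrations c ≥ 0, subject to Σ_r w_r c_r = c^tot and v̄ = c ∘ κ(x̄,p) ∈ C with v̄_{r*} > 0) has an optimal solution, then it has an optimal solution whose steady-state flux v̄ is an elementary flux mode. -/

import Mathlib

def fluxCone {S R : Type*} [Fintype R] (N : Matrix S R ℝ) (Rirr : Set R) :
    Set (R → ℝ) :=
  {f | N.mulVec f = 0 ∧ ∀ r ∈ Rirr, 0 ≤ f r}

def IsEFM {S R : Type*} [Fintype R] (N : Matrix S R ℝ) (Rirr : Set R)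
    (e : R → ℝ) : Prop :=
  e ∈ fluxCone N Rirr ∧ e ≠ 0 ∧
    ∀ g ∈ fluxCone N Rirr, g ≠ 0 →
      Function.support g ⊆ Function.support e →
      Function.support g = Function.support e

/-- A feasible solution of the enzyme allocation problem. -/
def Feasible {S R : Type*} [Fintype R] (N : Matrix S R ℝ) (Rirr : Set R)
    (κ : (S → ℝ) → R → ℝ) (w : R → ℝ) (ctot : ℝ) (rstar : R)
    (X : Set (S → ℝ)) (x : S → ℝ) (c : R → ℝ) : Prop :=
  x ∈ X ∧ (∀ r, 0 ≤ c r) ∧ (∑ r, w r * c r = ctot) ∧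
    (fun r => c r * κ x r) ∈ fluxCone N Rirr ∧ 0 < c rstar * κ x rstar

lemma key_realize {S R : Type*} [Fintype S] [Fintype R]
    (N : Matrix S R ℝ) (Rirr : Set R) (κ : (S → ℝ) → R → ℝ)
    (w : R → ℝ) (hw : ∀ r, 0 < w r) (ctot : ℝ) (hctot : 0 < ctot)
    (rstar : R) (X : Set (S → ℝ)) {x : S → ℝ} {c : R → ℝ}
    (hfeas : Feasible N Rirr κ w ctot rstar X x c)
    (u : R → ℝ) (hker : N.mulVec u = 0)
    (hconf : ∀ r, 0 ≤ u r * (c r * κ x r))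
    (hsupp : ∀ r, c r * κ x r = 0 → u r = 0)
    (hune : u ≠ 0) :
    0 < ∑ r, w r * c r * u r / (c r * κ x r) ∧
      (0 < u rstar →
        Feasible N Rirr κ w ctot rstar X x
          (fun r => (ctot / ∑ r, w r * c r * u r / (c r * κ x r)) *
            (c r * u r / (c r * κ x r))) ∧
        ∀ r, ((ctot / ∑ r, w r * c r * u r / (c r * κ x r)) *
            (c r * u r / (c r * κ x r))) * κ x r =
          (ctot / ∑ r, w r * c r * u r / (c r * κ x r)) * u r) := by
  obtain ⟨hx, hc, hbudget, hcone, hvstar⟩ := hfeas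
  set v : R → ℝ := fun r => c r * κ x r with hv
  have hcpos : ∀ r, v r ≠ 0 → 0 < c r := by
    intro r h
    rcases (hc r).lt_or_eq with h' | h'
    · exact h'
    · exact absurd (by simp [hv, ← h']) h
  have hdivnn : ∀ r, 0 ≤ u r / v r := by
    intro r
    by_cases h : v r = 0
    · simp [h]
    · have h2 : u r / v r = (u r * v r) / (v r * v r) := by
        rw [mul_div_mul_right _ _ h]
      rw [h2]
      exact div_nonneg (hconf r) (mul_self_nonneg _)
  have hterm : ∀ r, 0 ≤ w r * c r * u r / (c r * κ x r) := by
    intro r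
    have : w r * c r * u r / (c r * κ x r) = (w r * c r) * (u r / v r) := by
      rw [hv]; ring
    rw [this]
    exact mul_nonneg (mul_nonneg (hw r).le (hc r)) (hdivnn r)
  have hCpos : 0 < ∑ r, w r * c r * u r / (c r * κ x r) := by
    obtain ⟨r₀, hr₀⟩ := Function.ne_iff.mp hune
    have hvr₀ : v r₀ ≠ 0 := fun h => hr₀ (hsupp r₀ h)
    refine Finset.sum_pos' (fun r _ => hterm r) ⟨r₀, Finset.mem_univ _, ?_⟩
    have huv : 0 < u r₀ * v r₀ :=
      lt_of_le_of_ne (hconf r₀) (Ne.symm (mul_ne_zero (by simpa using hr₀) hvr₀))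
    have hdiv : 0 < u r₀ / v r₀ := by
      have h2 : u r₀ / v r₀ = (u r₀ * v r₀) / (v r₀ * v r₀) := by
        rw [mul_div_mul_right _ _ hvr₀]
      rw [h2]
      exact div_pos huv (mul_self_pos.mpr hvr₀)
    have : w r₀ * c r₀ * u r₀ / (c r₀ * κ x r₀) = (w r₀ * c r₀) * (u r₀ / v r₀) := by
      rw [hv]; ring
    rw [this]
    exact mul_pos (mul_pos (hw r₀) (hcpos r₀ hvr₀)) hdiv
  refine ⟨hCpos, fun hur => ?_⟩
  set C : ℝ := ∑ r, w r * c r * u r / (c r * κ x r) with hC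
  set μ : ℝ := ctot / C with hμ
  have hμpos : 0 < μ := div_pos hctot hCpos
  have hflux : ∀ r, (μ * (c r * u r / (c r * κ x r))) * κ x r = μ * u r := by
    intro r
    by_cases h : v r = 0
    · have hu0 : u r = 0 := hsupp r h
      rcases mul_eq_zero.mp h with h' | h' <;> simp [hu0, h']
    · have hc0 : c r ≠ 0 := (hcpos r h).ne'
      have hκ0 : κ x r ≠ 0 := by
        intro h'; exact h (by simp [hv, h'])
      field_simp
  constructor
  · refine ⟨hx, ?_, ?_, ?_, ?_⟩
    · intro r
      show 0 ≤ μ * (c r * u r / (c r * κ x r))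
      have : c r * u r / (c r * κ x r) = c r * (u r / v r) := by rw [hv]; ring
      rw [this]
      exact mul_nonneg hμpos.le (mul_nonneg (hc r) (hdivnn r))
    · have : ∀ r, w r * (μ * (c r * u r / (c r * κ x r)))
          = μ * (w r * c r * u r / (c r * κ x r)) := by intro r; ring
      rw [Finset.sum_congr rfl (fun r _ => this r), ← Finset.mul_sum, ← hC, hμ]
      field_simp
    · constructor
      · have heq : (fun r => (μ * (c r * u r / (c r * κ x r))) * κ x r) = μ • u := by
          funext r; rw [hflux r]; rfl
        rw [heq, Matrix.mulVec_smul, hker, smul_zero]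
      · intro r hr
        show 0 ≤ (μ * (c r * u r / (c r * κ x r))) * κ x r
        rw [hflux r]
        have hvr : 0 ≤ v r := hcone.2 r hr
        have hur' : 0 ≤ u r := by
          by_cases h : v r = 0
          · rw [hsupp r h]
          · have hvpos : 0 < v r := lt_of_le_of_ne hvr (Ne.symm h)
            have hconf' : 0 ≤ u r * v r := hconf r
            nlinarith [hconf', hvpos]
        exact mul_nonneg hμpos.le hur'
    · rw [hflux rstar]
      exact mul_pos hμpos hur
  · exact hflux

lemma key_bound {S R : Type*} [Fintype S] [Fintype R]
    (N : Matrix S R ℝ) (Rirr : Set R) (κ : (S → ℝ) → R → ℝ)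
    (w : R → ℝ) (hw : ∀ r, 0 < w r) (ctot : ℝ) (hctot : 0 < ctot)
    (rstar : R) (X : Set (S → ℝ)) {x : S → ℝ} {c : R → ℝ}
    (hfeas : Feasible N Rirr κ w ctot rstar X x c)
    (hopt' : ∀ x' c', Feasible N Rirr κ w ctot rstar X x' c' →
      c' rstar * κ x' rstar ≤ c rstar * κ x rstar)
    (u : R → ℝ) (hker : N.mulVec u = 0)
    (hconf : ∀ r, 0 ≤ u r * (c r * κ x r))
    (hsupp : ∀ r, c r * κ x r = 0 → u r = 0)
    (hune : u ≠ 0) :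
    ctot * u rstar ≤
      (c rstar * κ x rstar) * ∑ r, w r * c r * u r / (c r * κ x r) := by
  obtain ⟨hC, hreal⟩ := key_realize N Rirr κ w hw ctot hctot rstar X hfeas u
    hker hconf hsupp hune
  set C : ℝ := ∑ r, w r * c r * u r / (c r * κ x r) with hCdef
  by_cases h : 0 < u rstar
  · obtain ⟨hfeas', hflux⟩ := hreal h
    have hle := hopt' x _ hfeas'
    have : (ctot / C) * (c rstar * u rstar / (c rstar * κ x rstar)) * κ x rstar
        = (ctot / C) * u rstar := hflux rstar
    rw [this] at hle
    rw [div_mul_eq_mul_div, div_le_iff₀ hC] at hle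
    linarith
  · push_neg at h
    have h1 : ctot * u rstar ≤ 0 := mul_nonpos_of_nonneg_of_nonpos hctot.le h
    have h2 : 0 < (c rstar * κ x rstar) * C := mul_pos hfeas.2.2.2.2 hC
    linarith

lemma exists_smaller {S R : Type*} [Fintype S] [Fintype R]
    (N : Matrix S R ℝ) (Rirr : Set R) (κ : (S → ℝ) → R → ℝ)
    (w : R → ℝ) (hw : ∀ r, 0 < w r) (ctot : ℝ) (hctot : 0 < ctot)
    (rstar : R) (X : Set (S → ℝ)) {x : S → ℝ} {c : R → ℝ}
    (hfeas : Feasible N Rirr κ w ctot rstar X x c)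
    (hopt' : ∀ x' c', Feasible N Rirr κ w ctot rstar X x' c' →
      c' rstar * κ x' rstar ≤ c rstar * κ x rstar)
    (u₁ u₂ : R → ℝ) (α β : ℝ) (hα : 0 < α) (hβ : 0 < β)
    (hker₁ : N.mulVec u₁ = 0) (hker₂ : N.mulVec u₂ = 0)
    (hconf₁ : ∀ r, 0 ≤ u₁ r * (c r * κ x r))
    (hsupp₁ : ∀ r, c r * κ x r = 0 → u₁ r = 0)
    (hconf₂ : ∀ r, 0 ≤ u₂ r * (c r * κ x r))
    (hsupp₂ : ∀ r, c r * κ x r = 0 → u₂ r = 0)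
    (h₁ne : u₁ ≠ 0) (h₂ne : u₂ ≠ 0)
    (hdecomp : ∀ r, c r * κ x r = α * u₁ r + β * u₂ r)
    (hmiss : ∃ r, c r * κ x r ≠ 0 ∧ u₁ r = 0) :
    ∃ c', Feasible N Rirr κ w ctot rstar X x c' ∧
      c' rstar * κ x rstar = c rstar * κ x rstar ∧
      (Finset.univ.filter (fun r => c' r * κ x r ≠ 0)).card <
        (Finset.univ.filter (fun r => c r * κ x r ≠ 0)).card := by
  classical
  set vstar : ℝ := c rstar * κ x rstar with hvs
  have hvspos : 0 < vstar := hfeas.2.2.2.2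
  set C₁ : ℝ := ∑ r, w r * c r * u₁ r / (c r * κ x r) with hC₁
  set C₂ : ℝ := ∑ r, w r * c r * u₂ r / (c r * κ x r) with hC₂
  have hb₁ := key_bound N Rirr κ w hw ctot hctot rstar X hfeas hopt' u₁
    hker₁ hconf₁ hsupp₁ h₁ne
  have hb₂ := key_bound N Rirr κ w hw ctot hctot rstar X hfeas hopt' u₂
    hker₂ hconf₂ hsupp₂ h₂ne
  obtain ⟨hC₁pos, hreal₁⟩ := key_realize N Rirr κ w hw ctot hctot rstar X hfeas u₁
    hker₁ hconf₁ hsupp₁ h₁ne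
  obtain ⟨hC₂pos, -⟩ := key_realize N Rirr κ w hw ctot hctot rstar X hfeas u₂
    hker₂ hconf₂ hsupp₂ h₂ne
  -- cost of v itself
  have hCv_le : ∑ r, w r * c r * (c r * κ x r) / (c r * κ x r) ≤ ctot := by
    rw [← hfeas.2.2.1]
    refine Finset.sum_le_sum fun r _ => ?_
    by_cases h : c r * κ x r = 0
    · rw [h]
      simp [mul_nonneg (hw r).le (hfeas.2.1 r)]
    · rw [mul_div_assoc, div_self h, mul_one]
  have hCv_eq : ∑ r, w r * c r * (c r * κ x r) / (c r * κ x r)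
      = α * C₁ + β * C₂ := by
    rw [hC₁, hC₂, Finset.mul_sum, Finset.mul_sum, ← Finset.sum_add_distrib]
    refine Finset.sum_congr rfl fun r _ => ?_
    rw [hdecomp r]
    ring
  -- equality chain
  have hstareq : ctot * vstar = α * (ctot * u₁ rstar) + β * (ctot * u₂ rstar) := by
    rw [hvs, hdecomp rstar]; ring
  have hchain2 : vstar * (α * C₁ + β * C₂) ≤ vstar * ctot := by
    rw [← hCv_eq]
    exact mul_le_mul_of_nonneg_left hCv_le hvspos.le
  have heq₁ : ctot * u₁ rstar = vstar * C₁ := by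
    have h1 : α * (ctot * u₁ rstar) ≤ α * (vstar * C₁) :=
      mul_le_mul_of_nonneg_left hb₁ hα.le
    have h2 : β * (ctot * u₂ rstar) ≤ β * (vstar * C₂) :=
      mul_le_mul_of_nonneg_left hb₂ hβ.le
    nlinarith [h1, h2, hchain2, hstareq]
  have hu₁star : 0 < u₁ rstar := by
    have : 0 < vstar * C₁ := mul_pos hvspos hC₁pos
    nlinarith [heq₁]
  obtain ⟨hfeas', hflux⟩ := hreal₁ hu₁star
  have hC₁ne : C₁ ≠ 0 := by rw [hC₁]; exact hC₁pos.ne'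
  refine ⟨_, hfeas', ?_, ?_⟩
  · show ((ctot / ∑ r, w r * c r * u₁ r / (c r * κ x r)) *
        (c rstar * u₁ rstar / (c rstar * κ x rstar))) * κ x rstar = vstar
    rw [hflux rstar, ← hC₁, div_mul_eq_mul_div, heq₁]
    field_simp
  · have hfluxsupp : ∀ r,
        (((ctot / ∑ r, w r * c r * u₁ r / (c r * κ x r)) *
          (c r * u₁ r / (c r * κ x r))) * κ x r ≠ 0) ↔ u₁ r ≠ 0 := by
      intro r
      rw [hflux r]
      have hμ : ctot / ∑ r, w r * c r * u₁ r / (c r * κ x r) ≠ 0 :=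
        (div_pos hctot hC₁pos).ne'
      simp [hμ]
    have hsubset : (Finset.univ.filter
        (fun r => ((ctot / ∑ r, w r * c r * u₁ r / (c r * κ x r)) *
          (c r * u₁ r / (c r * κ x r))) * κ x r ≠ 0)) ⊂
        (Finset.univ.filter (fun r => c r * κ x r ≠ 0)) := by
      constructor
      · intro r hr
        rw [Finset.mem_filter] at hr ⊢
        refine ⟨Finset.mem_univ _, ?_⟩
        intro h
        exact ((hfluxsupp r).mp hr.2) (hsupp₁ r h)
      · intro hcontra
        obtain ⟨r₀, hr₀v, hr₀u⟩ := hmiss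
        have hmem : r₀ ∈ Finset.univ.filter (fun r => c r * κ x r ≠ 0) :=
          Finset.mem_filter.mpr ⟨Finset.mem_univ _, hr₀v⟩
        have hmem2 := hcontra hmem
        rw [Finset.mem_filter] at hmem2
        exact ((hfluxsupp r₀).mp hmem2.2) hr₀u
    exact Finset.card_lt_card hsubset

lemma shrink {R : Type*} [Fintype R] (v g : R → ℝ)
    (hgsupp : ∀ r, v r = 0 → g r = 0)
    (hA : ∃ r, 0 < g r * v r)
    (hmiss : ∃ r, v r ≠ 0 ∧ g r = 0) :
    ∃ t : ℝ, 0 < t ∧ (∀ r, 0 ≤ (v r - t * g r) * v r) ∧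
      (∀ r, v r = 0 → v r - t * g r = 0) ∧
      (∃ r, v r ≠ 0 ∧ v r - t * g r = 0) ∧
      (fun r => v r - t * g r) ≠ 0 := by
  classical
  set A : Finset R := Finset.univ.filter (fun r => 0 < g r * v r) with hAdef
  have hAne : A.Nonempty := by
    obtain ⟨r, hr⟩ := hA
    exact ⟨r, Finset.mem_filter.mpr ⟨Finset.mem_univ _, hr⟩⟩
  obtain ⟨r₁, hr₁A, hr₁min⟩ := A.exists_min_image (fun r => v r / g r) hAne
  have hr₁pos : 0 < g r₁ * v r₁ := (Finset.mem_filter.mp hr₁A).2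
  have hg₁ : g r₁ ≠ 0 := fun h => by simp [h] at hr₁pos
  have hv₁ : v r₁ ≠ 0 := fun h => by simp [h] at hr₁pos
  set t : ℝ := v r₁ / g r₁ with ht
  have htpos : 0 < t := by
    rw [ht]
    have : v r₁ / g r₁ = (g r₁ * v r₁) / (g r₁ * g r₁) := by
      rw [div_eq_div_iff hg₁ (mul_ne_zero hg₁ hg₁)]
      ring
    rw [this]
    exact div_pos hr₁pos (mul_self_pos.mpr hg₁)
  refine ⟨t, htpos, ?_, ?_, ?_, ?_⟩
  · intro r
    by_cases h : 0 < g r * v r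
    · have hrA : r ∈ A := Finset.mem_filter.mpr ⟨Finset.mem_univ _, h⟩
      have hle : t ≤ v r / g r := hr₁min r hrA
      have hgr : g r ≠ 0 := fun h' => by simp [h'] at h
      have key : t * (g r * v r) ≤ v r * v r := by
        have := mul_le_mul_of_nonneg_right hle h.le
        have heq : v r / g r * (g r * v r) = v r * v r := by
          field_simp
        linarith [heq ▸ this]
      nlinarith [key]
    · push_neg at h
      have h2 : t * (g r * v r) ≤ 0 := mul_nonpos_of_nonneg_of_nonpos htpos.le h
      nlinarith [h2, mul_self_nonneg (v r)]
  · intro r h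
    rw [h, hgsupp r h]
    ring
  · refine ⟨r₁, hv₁, ?_⟩
    rw [ht]
    field_simp
    ring
  · obtain ⟨r₀, hr₀v, hr₀g⟩ := hmiss
    intro h
    have := congrFun h r₀
    rw [hr₀g] at this
    simp at this
    exact hr₀v this

/-- main theorem: if the enzyme allocation problem has an optimal
solution, then it has an optimal solution whose steady-state flux is an EFM. -/
theorem optimal_solution_is_efm {S R : Type*} [Fintype S] [Fintype R]
    (N : Matrix S R ℝ) (Rirr : Set R) (κ : (S → ℝ) → R → ℝ)
    (w : R → ℝ) (hw : ∀ r, 0 < w r) (ctot : ℝ) (hctot : 0 < ctot)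
    (rstar : R) (X : Set (S → ℝ))
    (hopt : ∃ x c, Feasible N Rirr κ w ctot rstar X x c ∧
      ∀ x' c', Feasible N Rirr κ w ctot rstar X x' c' →
        c' rstar * κ x' rstar ≤ c rstar * κ x rstar) :
    ∃ x c, Feasible N Rirr κ w ctot rstar X x c ∧
      (∀ x' c', Feasible N Rirr κ w ctot rstar X x' c' →
        c' rstar * κ x' rstar ≤ c rstar * κ x rstar) ∧
      IsEFM N Rirr (fun r => c r * κ x r) := by
  classical
  obtain ⟨x₀, c₀, hfeas₀, hopt₀⟩ := hopt
  set M : ℝ := c₀ rstar * κ x₀ rstar with hM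
  set T : Set ℕ := {n | ∃ x c, Feasible N Rirr κ w ctot rstar X x c ∧
      c rstar * κ x rstar = M ∧
      (Finset.univ.filter (fun r => c r * κ x r ≠ 0)).card = n} with hT
  have hTne : T.Nonempty := ⟨_, x₀, c₀, hfeas₀, rfl, rfl⟩
  obtain ⟨x, c, hfeas, hMeq, hcard⟩ := Nat.sInf_mem hTne
  have hopt' : ∀ x' c', Feasible N Rirr κ w ctot rstar X x' c' →
      c' rstar * κ x' rstar ≤ c rstar * κ x rstar := by
    intro x' c' hf'
    exact (hopt₀ x' c' hf').trans_eq hMeq.symm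
  refine ⟨x, c, hfeas, hopt', hfeas.2.2.2.1, ?_, ?_⟩
  · intro h0
    have h1 := congrFun h0 rstar
    simp only [Pi.zero_apply] at h1
    have h2 := hfeas.2.2.2.2
    rw [h1] at h2
    exact lt_irrefl 0 h2
  · intro g hg hgne hsub
    by_contra hne
    have hgsupp : ∀ r, c r * κ x r = 0 → g r = 0 := by
      intro r h
      by_contra hgr
      exact (hsub (Function.mem_support.mpr hgr)) h
    have hmiss : ∃ r, c r * κ x r ≠ 0 ∧ g r = 0 := by
      have hss : Function.support g ⊂ Function.support (fun r => c r * κ x r) :=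
        hsub.ssubset_of_ne hne
      obtain ⟨r, hr1, hr2⟩ := Set.exists_of_ssubset hss
      exact ⟨r, hr1, by simpa using hr2⟩
    have hgker : N.mulVec g = 0 := hg.1
    -- the final contradiction maker
    have final : ∀ (u₁ u₂ : R → ℝ) (α β : ℝ), 0 < α → 0 < β →
        N.mulVec u₁ = 0 → N.mulVec u₂ = 0 →
        (∀ r, 0 ≤ u₁ r * (c r * κ x r)) →
        (∀ r, c r * κ x r = 0 → u₁ r = 0) →
        (∀ r, 0 ≤ u₂ r * (c r * κ x r)) →
        (∀ r, c r * κ x r = 0 → u₂ r = 0) →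
        u₁ ≠ 0 → u₂ ≠ 0 →
        (∀ r, c r * κ x r = α * u₁ r + β * u₂ r) →
        (∃ r, c r * κ x r ≠ 0 ∧ u₁ r = 0) → False := by
      intro u₁ u₂ α β hα hβ hk₁ hk₂ hc₁ hs₁ hc₂ hs₂ hn₁ hn₂ hdec hms
      obtain ⟨c', hfeas', hobj', hcard'⟩ := exists_smaller N Rirr κ w hw ctot hctot
        rstar X hfeas hopt' u₁ u₂ α β hα hβ hk₁ hk₂ hc₁ hs₁ hc₂ hs₂ hn₁ hn₂ hdec hms
      have hmem : (Finset.univ.filter (fun r => c' r * κ x r ≠ 0)).card ∈ T :=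
        ⟨x, c', hfeas', hobj'.trans hMeq, rfl⟩
      have hle := Nat.sInf_le hmem
      omega
    by_cases hA : ∃ r, 0 < g r * (c r * κ x r)
    · obtain ⟨t₁, ht₁pos, hconf₁, hsupp₁, hvan₁, hne₁⟩ :=
        shrink (fun r => c r * κ x r) g hgsupp hA hmiss
      by_cases hB : ∃ r, 0 < (-g r) * (c r * κ x r)
      · -- both directions
        have hgsupp' : ∀ r, c r * κ x r = 0 → -g r = 0 := by
          intro r h; rw [hgsupp r h, neg_zero]
        obtain ⟨t₂, ht₂pos, hconf₂, hsupp₂, hvan₂, hne₂⟩ :=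
          shrink (fun r => c r * κ x r) (fun r => -g r) hgsupp' hB
            (by obtain ⟨r, h1, h2⟩ := hmiss; exact ⟨r, h1, by simp [h2]⟩)
        have hsum : t₁ + t₂ ≠ 0 := by positivity
        refine final (fun r => c r * κ x r - t₁ * g r)
          (fun r => c r * κ x r - t₂ * (-g r))
          (t₂ / (t₁ + t₂)) (t₁ / (t₁ + t₂))
          (by positivity) (by positivity) ?_ ?_ hconf₁ hsupp₁ hconf₂ hsupp₂
          hne₁ hne₂ ?_ hvan₁
        · show N.mulVec ((fun r => c r * κ x r) - t₁ • g) = 0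
          rw [Matrix.mulVec_sub, Matrix.mulVec_smul, hfeas.2.2.2.1.1, hgker,
            smul_zero, sub_zero]
        · show N.mulVec ((fun r => c r * κ x r) - t₂ • (-g)) = 0
          rw [Matrix.mulVec_sub, Matrix.mulVec_smul, Matrix.mulVec_neg,
            hfeas.2.2.2.1.1, hgker, neg_zero, smul_zero, sub_zero]
        · intro r
          field_simp
          ring
      · -- g itself conformal
        push_neg at hB
        have hBc : ∀ r, 0 ≤ g r * (c r * κ x r) := by
          intro r
          have := hB r
          nlinarith [this]
        refine final (fun r => c r * κ x r - t₁ * g r) g 1 t₁ one_pos ht₁pos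
          ?_ hgker hconf₁ hsupp₁ (fun r => hBc r) hgsupp hne₁ hgne ?_ hvan₁
        · show N.mulVec ((fun r => c r * κ x r) - t₁ • g) = 0
          rw [Matrix.mulVec_sub, Matrix.mulVec_smul, hfeas.2.2.2.1.1, hgker,
            smul_zero, sub_zero]
        · intro r; ring
    · -- -g conformal
      push_neg at hA
      have hgsupp' : ∀ r, c r * κ x r = 0 → -g r = 0 := by
        intro r h; rw [hgsupp r h, neg_zero]
      have hB : ∃ r, 0 < (-g r) * (c r * κ x r) := by
        obtain ⟨r, hgr⟩ := Function.ne_iff.mp hgne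
        have hvr : c r * κ x r ≠ 0 := by
          intro h; exact hgr (hgsupp r h)
        have hprod : g r * (c r * κ x r) ≠ 0 :=
          mul_ne_zero (by simpa using hgr) hvr
        have := hA r
        refine ⟨r, ?_⟩
        rcases lt_or_gt_of_ne hprod with h | h
        · nlinarith [h]
        · exact absurd h (not_lt.mpr this)
      obtain ⟨t₂, ht₂pos, hconf₂, hsupp₂, hvan₂, hne₂⟩ :=
        shrink (fun r => c r * κ x r) (fun r => -g r) hgsupp' hB
          (by obtain ⟨r, h1, h2⟩ := hmiss; exact ⟨r, h1, by simp [h2]⟩)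
      have hAc : ∀ r, 0 ≤ (-g r) * (c r * κ x r) := by
        intro r
        have := hA r
        nlinarith [this]
      refine final (fun r => c r * κ x r - t₂ * (-g r)) (fun r => -g r) 1 t₂
        one_pos ht₂pos ?_ ?_ hconf₂ hsupp₂ hAc hgsupp' hne₂ ?_ ?_ hvan₂
      · show N.mulVec ((fun r => c r * κ x r) - t₂ • (-g)) = 0
        rw [Matrix.mulVec_sub, Matrix.mulVec_smul, Matrix.mulVec_neg,
          hfeas.2.2.2.1.1, hgker, neg_zero, smul_zero, sub_zero]
      · show N.mulVec (-g) = 0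
        rw [Matrix.mulVec_neg, hgker, neg_zero]
      · intro h
        apply hgne
        funext r
        have := congrFun h r
        simpa using this
      · intro r; ring
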